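/- Let k be a field and r a positive integer. Let Z³(C_r,k*) be the group (under pointwise multiplication) of 3-cocycles on the cyclic group C_r of order r with coefficients in k*, and B³(C_r,k*) its subgroup of 3-coboundaries. Then the quotient group H³(C_r,k*) = Z³(C_r,k*)/B³(C_r,k*) is isomorphic, as a group, to μ_r(k) = {α ∈ k* : α^r = 1}. -/

import Mathlib

set_option linter.unusedSectionVars false


def IsCocycle {k : Type*} [Field k] {G : Type*} [Group G] (φ : G → G → G → kˣ) : Prop :=
  ∀ x y z t : G, φ y z t * φ x (y * z) t * φ x y z = φ (x * y) z t * φ x y (z * t)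

def IsNormalized {k : Type*} [Field k] {G : Type*} [Group G] (φ : G → G → G → kˣ) : Prop :=
  ∀ x z : G, φ x 1 z = 1

def d2 {k : Type*} [Field k] {G : Type*} [Group G] (g : G → G → kˣ) : G → G → G → kˣ :=
  fun x y z => g y z * (g (x * y) z)⁻¹ * g x (y * z) * (g x y)⁻¹

def IsCoboundary {k : Type*} [Field k] {G : Type*} [Group G] (φ : G → G → G → kˣ) : Prop :=
  ∃ g : G → G → kˣ, φ = d2 g

/-- The group of 3-cocycles on `G` with coefficients in `kˣ`, under pointwise
multiplication. -/
def Z3 (k : Type*) [Field k] (G : Type*) [Group G] : Subgroup (G → G → G → kˣ) where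
  carrier := {φ : G → G → G → kˣ | IsCocycle φ}
  one_mem' := by
    show IsCocycle (1 : G → G → G → kˣ)
    intro x y z t
    simp
  mul_mem' := by
    intro a b ha hb
    replace ha : IsCocycle a := ha
    replace hb : IsCocycle b := hb
    show IsCocycle (a * b)
    intro x y z t
    simp only [Pi.mul_apply]
    simpa only [mul_assoc, mul_left_comm, mul_comm] using
      congrArg₂ (· * ·) (ha x y z t) (hb x y z t)
  inv_mem' := by
    intro a ha
    replace ha : IsCocycle a := ha
    show IsCocycle a⁻¹
    intro x y z t
    simp only [Pi.inv_apply]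
    simpa only [mul_inv, mul_assoc, mul_left_comm, mul_comm] using
      congrArg (·⁻¹) (ha x y z t)

/-- The group of 3-coboundaries on `G` with coefficients in `kˣ`. -/
def B3 (k : Type*) [Field k] (G : Type*) [Group G] : Subgroup (G → G → G → kˣ) where
  carrier := {φ : G → G → G → kˣ | IsCoboundary φ}
  one_mem' := by
    show IsCoboundary (1 : G → G → G → kˣ)
    exact ⟨1, by funext x y z; simp [d2]⟩
  mul_mem' := by
    intro a b ha hb
    obtain ⟨g, rfl⟩ : IsCoboundary a := ha
    obtain ⟨h, rfl⟩ : IsCoboundary b := hb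
    show IsCoboundary (d2 g * d2 h)
    refine ⟨g * h, ?_⟩
    funext x y z
    simp only [d2, Pi.mul_apply, mul_inv, mul_assoc, mul_left_comm, mul_comm]
  inv_mem' := by
    intro a ha
    obtain ⟨g, rfl⟩ : IsCoboundary a := ha
    show IsCoboundary (d2 g)⁻¹
    refine ⟨g⁻¹, ?_⟩
    funext x y z
    simp only [d2, Pi.inv_apply, Pi.mul_apply, mul_inv, inv_inv, mul_assoc, mul_left_comm,
      mul_comm]

/-- The third cohomology group `H³(G, kˣ) = Z³(G, kˣ)/B³(G, kˣ)`. -/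
abbrev H3 (k : Type*) [Field k] (G : Type*) [Group G] :=
  Z3 k G ⧸ (B3 k G).subgroupOf (Z3 k G)

/-- `μ_n(k)`, the group of `n`-th roots of unity in `k`. -/
def mu (k : Type*) [Field k] (n : ℕ) : Subgroup kˣ where
  carrier := {α : kˣ | α ^ n = 1}
  one_mem' := by
    show (1 : kˣ) ^ n = 1
    exact one_pow n
  mul_mem' := by
    intro a b ha hb
    show (a * b) ^ n = 1
    rw [mul_pow, show a ^ n = 1 from ha, show b ^ n = 1 from hb, one_mul]
  inv_mem' := by
    intro a ha
    show a⁻¹ ^ n = 1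
    rw [inv_pow, show a ^ n = 1 from ha, inv_one]

namespace H3CyclicAux
section
variable {k : Type*} [Field k] (r : ℕ) [NeZero r]

abbrev GG (r : ℕ) := Multiplicative (ZMod r)
def vv (x : GG r) : ℕ := (Multiplicative.toAdd x).val
def sig : GG r := Multiplicative.ofAdd 1
lemma toAdd_sig_pow (n : ℕ) : Multiplicative.toAdd (sig r ^ n) = (n : ZMod r) := by simp [sig]
lemma sig_pow_vv (y : GG r) : sig r ^ vv r y = y := by
  apply Multiplicative.toAdd.injective
  rw [toAdd_sig_pow, vv, ZMod.natCast_val, ZMod.cast_id]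
lemma sig_pow_r : sig r ^ r = 1 := by
  apply Multiplicative.toAdd.injective
  rw [toAdd_sig_pow]; simp

lemma vv_lt (x : GG r) : vv r x < r := ZMod.val_lt _

lemma vv_mul (x y : GG r) : vv r (x * y) = (vv r x + vv r y) % r := by
  simpa [vv] using ZMod.val_add (Multiplicative.toAdd x) (Multiplicative.toAdd y)

def eps (y z : GG r) : ℕ := (vv r y + vv r z) / r

lemma carry (y z : GG r) : vv r y + vv r z = vv r (y * z) + r * eps r y z := by
  rw [vv_mul, eps, Nat.mod_add_div]

lemma eps_le_one (y z : GG r) : eps r y z ≤ 1 := by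
  have h1 := vv_lt r y; have h2 := vv_lt r z
  have h3 : 0 < r := Nat.pos_of_ne_zero (NeZero.ne r)
  rw [eps]
  have := (Nat.div_lt_iff_lt_mul h3).2 (show vv r y + vv r z < 2 * r by omega)
  omega

-- cyclic shift of a full product
lemma prod_sig_succ (f : GG r → kˣ) :
    ∏ j ∈ Finset.range r, f (sig r ^ (j + 1)) = ∏ j ∈ Finset.range r, f (sig r ^ j) := by
  obtain ⟨m, rfl⟩ : ∃ m, r = m + 1 := ⟨r - 1, by have := NeZero.ne r; omega⟩
  rw [Finset.prod_range_succ, Finset.prod_range_succ']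
  rw [show sig (m+1) ^ (m + 1) = sig (m+1) ^ 0 by rw [pow_zero, sig_pow_r]]
  try exact mul_comm _ _

lemma prod_sig_shift (f : GG r → kˣ) (n : ℕ) :
    ∏ j ∈ Finset.range r, f (sig r ^ (n + j)) = ∏ j ∈ Finset.range r, f (sig r ^ j) := by
  induction n with
  | zero => simp
  | succ n ih =>
    have h1 : ∀ j, sig r ^ (n + 1 + j) = sig r ^ n * sig r ^ (j + 1) := by
      intro j; rw [← pow_add]; ring_nf
    have h2 : ∀ j : ℕ, sig r ^ (n + j) = sig r ^ n * sig r ^ j := fun j => by rw [← pow_add]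
    calc ∏ j ∈ Finset.range r, f (sig r ^ (n + 1 + j))
        = ∏ j ∈ Finset.range r, (fun t => f (sig r ^ n * t)) (sig r ^ (j + 1)) := by
          refine Finset.prod_congr rfl fun j _ => by rw [h1]
      _ = ∏ j ∈ Finset.range r, (fun t => f (sig r ^ n * t)) (sig r ^ j) := prod_sig_succ r (fun t => f (sig r ^ n * t))
      _ = ∏ j ∈ Finset.range r, f (sig r ^ (n + j)) := by
          refine Finset.prod_congr rfl fun j _ => by simp only [← h2]
      _ = _ := ih

-- the "norm" map
def Wf (φ : GG r → GG r → GG r → kˣ) (x : GG r) : kˣ :=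
  ∏ j ∈ Finset.range r, φ x (sig r ^ j) (sig r)

lemma Wf_mul (φ : GG r → GG r → GG r → kˣ) (hφ : IsCocycle φ) (x y : GG r) :
    Wf r φ (x * y) = Wf r φ x * Wf r φ y := by
  have base : ∀ j : ℕ, φ y (sig r ^ j) (sig r) * φ x (y * sig r ^ j) (sig r) * φ x y (sig r ^ j)
      = φ (x * y) (sig r ^ j) (sig r) * φ x y (sig r ^ j * sig r) := fun j => hφ x y _ _
  have hprod := Finset.prod_congr rfl fun j (_ : j ∈ Finset.range r) => base j
  simp only [Finset.prod_mul_distrib] at hprod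
  have hmid : ∏ j ∈ Finset.range r, φ x (y * sig r ^ j) (sig r)
      = ∏ j ∈ Finset.range r, φ x (sig r ^ j) (sig r) := by
    calc ∏ j ∈ Finset.range r, φ x (y * sig r ^ j) (sig r)
        = ∏ j ∈ Finset.range r, (fun t => φ x t (sig r)) (sig r ^ (vv r y + j)) := by
          refine Finset.prod_congr rfl fun j _ => by
            rw [pow_add, sig_pow_vv]
      _ = _ := prod_sig_shift r (fun t => φ x t (sig r)) (vv r y)
  have hlast : ∏ j ∈ Finset.range r, φ x y (sig r ^ j * sig r)
      = ∏ j ∈ Finset.range r, φ x y (sig r ^ j) := by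
    calc ∏ j ∈ Finset.range r, φ x y (sig r ^ j * sig r)
        = ∏ j ∈ Finset.range r, (fun t => φ x y t) (sig r ^ (j + 1)) := by
          refine Finset.prod_congr rfl fun j _ => by rw [pow_succ]
      _ = _ := prod_sig_succ r (fun t => φ x y t)
  rw [hmid, hlast] at hprod
  have : Wf r φ y * Wf r φ x * (∏ j ∈ Finset.range r, φ x y (sig r ^ j))
      = Wf r φ (x * y) * (∏ j ∈ Finset.range r, φ x y (sig r ^ j)) := hprod
  have := mul_right_cancel this
  rw [← this]; exact mul_comm _ _

lemma Wf_one (φ : GG r → GG r → GG r → kˣ) (hφ : IsCocycle φ) : Wf r φ 1 = 1 := by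
  have := Wf_mul r φ hφ 1 1
  rw [mul_one] at this
  exact right_eq_mul.mp this

lemma Wf_pow (φ : GG r → GG r → GG r → kˣ) (hφ : IsCocycle φ) (n : ℕ) :
    Wf r φ (sig r ^ n) = (Wf r φ (sig r)) ^ n := by
  induction n with
  | zero => simpa using Wf_one r φ hφ
  | succ n ih => rw [pow_succ, pow_succ, Wf_mul r φ hφ, ih]

lemma Wf_sig_pow_r (φ : GG r → GG r → GG r → kˣ) (hφ : IsCocycle φ) :
    (Wf r φ (sig r)) ^ r = 1 := by
  rw [← Wf_pow r φ hφ, sig_pow_r]; exact Wf_one r φ hφ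

lemma Wf_eq (φ : GG r → GG r → GG r → kˣ) (hφ : IsCocycle φ) (x : GG r) :
    Wf r φ x = (Wf r φ (sig r)) ^ (vv r x) := by
  rw [← Wf_pow r φ hφ, sig_pow_vv]


lemma phi_one (φ : GG r → GG r → GG r → kˣ) (hφ : IsCocycle φ) : φ 1 1 1 = 1 := by
  have h := hφ 1 1 1 1
  simp only [one_mul] at h
  exact mul_left_cancel (show (φ 1 1 1 * φ 1 1 1) * φ 1 1 1 = (φ 1 1 1 * φ 1 1 1) * 1 by
    rw [mul_one]; exact h)

lemma norm_left (φ : GG r → GG r → GG r → kˣ) (hφ : IsCocycle φ)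
    (hN : ∀ a b : GG r, φ a 1 b = 1) (z t : GG r) : φ 1 z t = 1 := by
  have h := hφ 1 1 z t
  simp only [one_mul, hN, mul_one] at h
  exact mul_left_cancel (show φ 1 z t * φ 1 z t = φ 1 z t * 1 by rw [mul_one]; exact h)

lemma norm_right (φ : GG r → GG r → GG r → kˣ) (hφ : IsCocycle φ)
    (hN : ∀ a b : GG r, φ a 1 b = 1) (x y : GG r) : φ x y 1 = 1 := by
  have h := hφ x y 1 1
  simp only [mul_one, one_mul, hN] at h
  exact mul_left_cancel (show φ x y 1 * φ x y 1 = φ x y 1 * 1 by rw [mul_one]; exact h)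

/-- the explicit 2-cochain -/
def gfun (φ : GG r → GG r → GG r → kˣ) (x y : GG r) : kˣ :=
  ∏ j ∈ Finset.range (vv r y), φ x (sig r ^ j) (sig r)

lemma star (φ : GG r → GG r → GG r → kˣ) (hφ : IsCocycle φ)
    (hN : ∀ a b : GG r, φ a 1 b = 1) (x y z : GG r) :
    φ x y z * (gfun r φ (x * y) z * gfun r φ x y)
      = (Wf r φ (sig r)) ^ (vv r x * eps r y z) * (gfun r φ y z * gfun r φ x (y * z)) := by
  set P := (Wf r φ (sig r)) ^ (vv r x * eps r y z) with hPdef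
  set F : ℕ → kˣ := fun n => φ x (sig r ^ n) (sig r) with hF
  have hprod := Finset.prod_congr rfl
    (fun j (_ : j ∈ Finset.range (vv r z)) => hφ x y (sig r ^ j) (sig r))
  simp only [Finset.prod_mul_distrib] at hprod
  have hmid : ∏ j ∈ Finset.range (vv r z), φ x (y * sig r ^ j) (sig r)
      = ∏ j ∈ Finset.range (vv r z), F (vv r y + j) :=
    Finset.prod_congr rfl fun j _ => by simp only [hF]; rw [pow_add, sig_pow_vv]
  have hlast : ∏ j ∈ Finset.range (vv r z), φ x y (sig r ^ j * sig r)
      = (∏ j ∈ Finset.range (vv r z), φ x y (sig r ^ j)) * φ x y z := by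
    have h1 : ∏ j ∈ Finset.range (vv r z), φ x y (sig r ^ j * sig r)
        = ∏ j ∈ Finset.range (vv r z), φ x y (sig r ^ (j + 1)) :=
      Finset.prod_congr rfl fun j _ => by rw [pow_succ]
    have h2 := Finset.prod_range_succ (fun j => φ x y (sig r ^ j)) (vv r z)
    have h3 := Finset.prod_range_succ' (fun j => φ x y (sig r ^ j)) (vv r z)
    simp only [pow_zero, norm_right r φ hφ hN x y, mul_one] at h3
    rw [h1, ← h3, h2, sig_pow_vv]
  have hsplit : ∏ j ∈ Finset.range (vv r y + vv r z), F j
      = gfun r φ x y * ∏ j ∈ Finset.range (vv r z), F (vv r y + j) :=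
    Finset.prod_range_add F (vv r y) (vv r z)
  have hP : ∏ j ∈ Finset.range (vv r y + vv r z), F j = P * gfun r φ x (y * z) := by
    have hc := carry r y z
    rcases Nat.le_one_iff_eq_zero_or_eq_one.mp (eps_le_one r y z) with h0 | h1
    · rw [h0, mul_zero, add_zero] at hc
      rw [hPdef, h0, mul_zero, pow_zero, one_mul, hc]
      rfl
    · rw [h1, mul_one] at hc
      rw [hc, Finset.prod_range_add F (vv r (y * z)) r]
      have hsh : ∏ j ∈ Finset.range r, F (vv r (y * z) + j)
          = ∏ j ∈ Finset.range r, F j := by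
        have := prod_sig_shift r (fun t => φ x t (sig r)) (vv r (y * z))
        simpa [hF] using this
      rw [hsh]
      have hW : ∏ j ∈ Finset.range r, F j = P := by
        rw [hPdef, h1, mul_one, ← Wf_eq r φ hφ x]
        rfl
      rw [hW]
      exact mul_comm _ _
  rw [hmid, hlast] at hprod
  have hprod' : gfun r φ y z * (∏ j ∈ Finset.range (vv r z), F (vv r y + j))
        * (∏ j ∈ Finset.range (vv r z), φ x y (sig r ^ j))
      = gfun r φ (x * y) z
        * ((∏ j ∈ Finset.range (vv r z), φ x y (sig r ^ j)) * φ x y z) := hprod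
  have key : φ x y z * (gfun r φ (x * y) z * gfun r φ x y)
        * (∏ j ∈ Finset.range (vv r z), φ x y (sig r ^ j))
      = (P * (gfun r φ y z * gfun r φ x (y * z)))
        * (∏ j ∈ Finset.range (vv r z), φ x y (sig r ^ j)) := by
    calc φ x y z * (gfun r φ (x * y) z * gfun r φ x y)
          * (∏ j ∈ Finset.range (vv r z), φ x y (sig r ^ j))
        = (gfun r φ (x * y) z
            * ((∏ j ∈ Finset.range (vv r z), φ x y (sig r ^ j)) * φ x y z))
          * gfun r φ x y := by
          simp only [mul_comm, mul_left_comm, mul_assoc]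
      _ = (gfun r φ y z * (∏ j ∈ Finset.range (vv r z), F (vv r y + j))
            * (∏ j ∈ Finset.range (vv r z), φ x y (sig r ^ j))) * gfun r φ x y := by
          rw [← hprod']
      _ = gfun r φ y z
            * (gfun r φ x y * (∏ j ∈ Finset.range (vv r z), F (vv r y + j)))
            * (∏ j ∈ Finset.range (vv r z), φ x y (sig r ^ j)) := by
          simp only [mul_comm, mul_left_comm, mul_assoc]
      _ = gfun r φ y z * (P * gfun r φ x (y * z))
            * (∏ j ∈ Finset.range (vv r z), φ x y (sig r ^ j)) := by
          rw [← hsplit, hP]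
      _ = (P * (gfun r φ y z * gfun r φ x (y * z)))
            * (∏ j ∈ Finset.range (vv r z), φ x y (sig r ^ j)) := by
          simp only [mul_comm, mul_left_comm, mul_assoc]
  exact mul_right_cancel key

def psi (α : kˣ) : GG r → GG r → GG r → kˣ :=
  fun x y z => α ^ (vv r x * eps r y z)

lemma psi_cocycle (α : kˣ) (hα1 : α ^ r = 1) : IsCocycle (psi r α) := by
  intro x y z t
  simp only [psi]
  rw [← pow_add, ← pow_add, ← pow_add]
  have hrpos : 0 < r := Nat.pos_of_ne_zero (NeZero.ne r)
  have c1 := carry r y z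
  have c2 := carry r z t
  have c3 := carry r x y
  have c4 := carry r (y * z) t
  have c5 := carry r y (z * t)
  have hA : vv r (y * z * t) = vv r (y * (z * t)) := by rw [mul_assoc]
  have hE : eps r y z + eps r (y * z) t = eps r z t + eps r y (z * t) :=
    Nat.eq_of_mul_eq_mul_left hrpos
      (by rw [Nat.mul_add, Nat.mul_add]; linarith)
  have hvx : vv r x * eps r y z + vv r x * eps r (y * z) t
      = vv r x * eps r z t + vv r x * eps r y (z * t) := by
    rw [← Nat.mul_add, ← Nat.mul_add, hE]
  have hexp : vv r y * eps r z t + vv r x * eps r (y * z) t + vv r x * eps r y z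
      = vv r (x * y) * eps r z t + vv r x * eps r y (z * t)
        + r * (eps r x y * eps r z t) := by
    rcases Nat.le_one_iff_eq_zero_or_eq_one.mp (eps_le_one r z t) with h2 | h2 <;>
      rcases Nat.le_one_iff_eq_zero_or_eq_one.mp (eps_le_one r x y) with h3 | h3 <;>
      simp only [h2, h3] at c3 hvx ⊢ <;> linarith
  rw [hexp, pow_add, pow_mul, hα1, one_pow, mul_one]

lemma d2_mul (g h : GG r → GG r → kˣ) : d2 (g * h) = d2 g * d2 h := by
  funext x y z
  simp only [d2, Pi.mul_apply, mul_inv, mul_comm, mul_left_comm, mul_assoc]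

lemma d2_cocycle (g : GG r → GG r → kˣ) : IsCocycle (d2 g) := by
  intro x y z t
  rw [Units.ext_iff]
  simp only [d2, Units.val_mul, Units.val_inv_eq_inv_val, mul_assoc]
  field_simp

-- invariant of a coboundary is 1
lemma Wf_d2 (g : GG r → GG r → kˣ) : Wf r (d2 g) (sig r) = 1 := by
  unfold Wf d2
  simp only [Finset.prod_mul_distrib, Finset.prod_inv_distrib]
  have h1 : ∏ j ∈ Finset.range r, g (sig r * sig r ^ j) (sig r)
      = ∏ j ∈ Finset.range r, g (sig r ^ j) (sig r) := by
    calc ∏ j ∈ Finset.range r, g (sig r * sig r ^ j) (sig r)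
        = ∏ j ∈ Finset.range r, (fun t => g t (sig r)) (sig r ^ (j + 1)) :=
          Finset.prod_congr rfl fun j _ => by rw [pow_succ, mul_comm]
      _ = _ := prod_sig_succ r (fun t => g t (sig r))
  have h2 : ∏ j ∈ Finset.range r, g (sig r) (sig r ^ j * sig r)
      = ∏ j ∈ Finset.range r, g (sig r) (sig r ^ j) := by
    calc ∏ j ∈ Finset.range r, g (sig r) (sig r ^ j * sig r)
        = ∏ j ∈ Finset.range r, (fun t => g (sig r) t) (sig r ^ (j + 1)) :=
          Finset.prod_congr rfl fun j _ => by rw [pow_succ]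
      _ = _ := prod_sig_succ r (fun t => g (sig r) t)
  rw [h1, h2]
  group

lemma Wf_psi (α : kˣ) (hr2 : 1 < r) : Wf r (psi r α) (sig r) = α := by
  haveI : Fact (1 < r) := ⟨hr2⟩
  have hv1 : vv r (sig r) = 1 := by
    simp only [vv, sig, toAdd_ofAdd]
    exact ZMod.val_one r
  unfold Wf psi
  have hterm : ∀ j ∈ Finset.range r,
      α ^ (vv r (sig r) * eps r (sig r ^ j) (sig r)) = α ^ (if j = r - 1 then 1 else 0) := by
    intro j hj
    rw [Finset.mem_range] at hj
    have hvj : vv r (sig r ^ j) = j := by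
      rw [vv, toAdd_sig_pow, ZMod.val_natCast, Nat.mod_eq_of_lt hj]
    rw [hv1, one_mul, eps, hvj, hv1]
    congr 1
    rcases eq_or_ne j (r - 1) with h | h
    · rw [if_pos h, h, Nat.sub_add_cancel (by omega), Nat.div_self (by omega)]
    · rw [if_neg h, Nat.div_eq_of_lt (by omega)]
  rw [Finset.prod_congr rfl hterm, Finset.prod_pow_eq_pow_sum]
  have : ∑ j ∈ Finset.range r, (if j = r - 1 then 1 else 0) = 1 := by
    rw [Finset.sum_ite_eq' (Finset.range r) (r - 1) (fun _ => 1),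
      if_pos (Finset.mem_range.mpr (by omega))]
  rw [this, pow_one]
lemma cocycle_mul (a b : GG r → GG r → GG r → kˣ) (ha : IsCocycle a) (hb : IsCocycle b) :
    IsCocycle (a * b) := by
  intro x y z t
  simp only [Pi.mul_apply]
  simpa only [mul_assoc, mul_left_comm, mul_comm] using
    congrArg₂ (· * ·) (ha x y z t) (hb x y z t)

lemma cocycle_inv (a : GG r → GG r → GG r → kˣ) (ha : IsCocycle a) : IsCocycle a⁻¹ := by
  intro x y z t
  simp only [Pi.inv_apply]
  simpa only [mul_inv, mul_assoc, mul_left_comm, mul_comm] using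
    congrArg (·⁻¹) (ha x y z t)

lemma main_factor (φ : GG r → GG r → GG r → kˣ) (hφ : IsCocycle φ) :
    ∃ (α : kˣ) (g : GG r → GG r → kˣ), α ^ r = 1 ∧ φ = psi r α * d2 g := by
  set g0 : GG r → GG r → kˣ := fun x y => φ 1 1 y * (φ x 1 1)⁻¹ with hg0
  have h111 := phi_one r φ hφ
  have hid : ∀ x z : GG r, φ x 1 z = φ 1 1 z * φ x 1 1 := by
    intro x z
    have h := hφ x 1 1 z
    simp only [mul_one, one_mul] at h
    have h2 : φ x 1 z * (φ 1 1 z * φ x 1 1) = φ x 1 z * φ x 1 z := by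
      rw [← h]; simp only [mul_comm, mul_left_comm, mul_assoc]
    exact (mul_left_cancel h2).symm
  have hd2g0 : ∀ x z : GG r, d2 g0 x 1 z = φ x 1 z := by
    intro x z
    have e1 : d2 g0 x 1 z = g0 1 z * (g0 x 1)⁻¹ := by
      simp only [d2, mul_one, one_mul]
      rw [inv_mul_cancel_right]
    rw [e1]
    simp only [hg0, h111, inv_one, mul_one, mul_inv, inv_inv, one_mul]
    exact (hid x z).symm
  set φ' : GG r → GG r → GG r → kˣ := φ * (d2 g0)⁻¹ with hφ'def
  have hφ'c : IsCocycle φ' := cocycle_mul r _ _ hφ (cocycle_inv r _ (d2_cocycle r g0))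
  have hN' : ∀ a b : GG r, φ' a 1 b = 1 := by
    intro a b
    simp only [hφ'def, Pi.mul_apply, Pi.inv_apply, hd2g0]
    simp
  refine ⟨Wf r φ' (sig r), gfun r φ' * g0, Wf_sig_pow_r r φ' hφ'c, ?_⟩
  rw [d2_mul]
  funext x y z
  have h1 : φ' x y z = (Wf r φ' (sig r)) ^ (vv r x * eps r y z)
      * (gfun r φ' y z * gfun r φ' x (y * z))
      * (gfun r φ' (x * y) z * gfun r φ' x y)⁻¹ :=
    eq_mul_inv_of_mul_eq (star r φ' hφ'c hN' x y z)
  have h2 : φ x y z = φ' x y z * d2 g0 x y z := by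
    simp only [hφ'def, Pi.mul_apply, Pi.inv_apply]
    rw [inv_mul_cancel_right]
  have h3 : (Wf r φ' (sig r)) ^ (vv r x * eps r y z)
      * (gfun r φ' y z * gfun r φ' x (y * z))
      * (gfun r φ' (x * y) z * gfun r φ' x y)⁻¹
      = psi r (Wf r φ' (sig r)) x y z * d2 (gfun r φ') x y z := by
    simp only [psi, d2, mul_inv, mul_comm, mul_left_comm, mul_assoc]
  show φ x y z = (psi r (Wf r φ' (sig r)) * (d2 (gfun r φ') * d2 g0)) x y z
  rw [h2, h1, h3]
  simp only [Pi.mul_apply, mul_assoc]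
end

end H3CyclicAux

theorem statement2 (k : Type*) [Field k] (r : ℕ) (hr : 0 < r) :
    Nonempty (H3 k (Multiplicative (ZMod r)) ≃* mu k r) := by
  haveI : NeZero r := ⟨hr.ne'⟩
  classical
  set G := Multiplicative (ZMod r)
  set N := (B3 k G).subgroupOf (Z3 k G) with hN
  have hpsi_mem : ∀ α : mu k r, H3CyclicAux.psi r (α : kˣ) ∈ Z3 k G :=
    fun α => H3CyclicAux.psi_cocycle r (α : kˣ) α.2
  let Ψ : mu k r →* Z3 k G :=
    { toFun := fun α => ⟨H3CyclicAux.psi r (α : kˣ), hpsi_mem α⟩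
      map_one' := by
        apply Subtype.ext
        funext x y z
        simp [H3CyclicAux.psi]
      map_mul' := fun α β => by
        apply Subtype.ext
        funext x y z
        simp [H3CyclicAux.psi, mul_pow] }
  let F : mu k r →* H3 k G := (QuotientGroup.mk' N).comp Ψ
  have hinj : Function.Injective F := by
    rw [injective_iff_map_eq_one]
    intro α hα
    have hmem : Ψ α ∈ N := by
      rw [hN, ← QuotientGroup.ker_mk' ((B3 k G).subgroupOf (Z3 k G))]
      exact hα
    have hb : ((Ψ α : Z3 k G) : G → G → G → kˣ) ∈ B3 k G := Subgroup.mem_subgroupOf.mp hmem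
    obtain ⟨g, hg⟩ : IsCoboundary (H3CyclicAux.psi r (α : kˣ)) := hb
    apply Subtype.ext
    show (α : kˣ) = 1
    by_cases h1 : r = 1
    · have h2 : (α : kˣ) ^ r = 1 := α.2
      subst h1
      simpa using h2
    · have hr2 : 1 < r := by
        have := hr; omega
      rw [show (α : kˣ) = H3CyclicAux.Wf r (H3CyclicAux.psi r (α : kˣ)) (H3CyclicAux.sig r) from
        (H3CyclicAux.Wf_psi r (α : kˣ) hr2).symm, hg]
      exact H3CyclicAux.Wf_d2 r g
  have hsurj : Function.Surjective F := by
    intro q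
    obtain ⟨⟨φ, hφc⟩, rfl⟩ := QuotientGroup.mk'_surjective N q
    obtain ⟨α, g, hα, hfac⟩ := H3CyclicAux.main_factor r φ hφc
    refine ⟨⟨α, hα⟩, ?_⟩
    show QuotientGroup.mk' N (Ψ ⟨α, hα⟩) = QuotientGroup.mk' N ⟨φ, hφc⟩
    rw [QuotientGroup.mk'_eq_mk']
    refine ⟨⟨d2 g, H3CyclicAux.d2_cocycle r g⟩, Subgroup.mem_subgroupOf.mpr ⟨g, rfl⟩, ?_⟩
    apply Subtype.ext
    show H3CyclicAux.psi r α * d2 g = φ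
    exact hfac.symm
  exact ⟨(MulEquiv.ofBijective F ⟨hinj, hsurj⟩).symm⟩
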